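/- Let ω, a ∈ ℝ³ with θ = ‖ω‖ ≠ 0, let Ω = [ω]^∧, let A_N be the 3×2 real matrix with columns (a, 0), let B = [[0,1],[0,0]], and let N be the 5×5 block matrix [[Ω, A_N],[0₂ₓ₃, B]]. Then for every t ∈ ℝ, exp(tN) = [[exp(tΩ), P_N(t)],[0₂ₓ₃, I₂ + tB]], where P_N(t) is the 3×2 matrix whose first column is ( t·I₃ + ((1 − cos(θt))/θ²)·Ω + ((θt − sin(θt))/θ³)·Ω² )·a and whose second column is ( (t²/2)·I₃ + ((θt − sin(θt))/θ³)·Ω + ((θ²t²/2 − 1 + cos(θt))/θ⁴)·Ω² )·a. -/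

import Mathlib

open Matrix

/-- The hat map `[ω]^∧`: the skew-symmetric matrix satisfying `([ω]^∧) x = ω × x`. -/
noncomputable def hat (ω : EuclideanSpace ℝ (Fin 3)) : Matrix (Fin 3) (Fin 3) ℝ :=
  !![0, -ω 2, ω 1; ω 2, 0, -ω 0; -ω 1, ω 0, 0]

/-- The 3×2 matrix with the two given columns. -/
noncomputable def cols (u w : Fin 3 → ℝ) : Matrix (Fin 3) (Fin 2) ℝ :=
  Matrix.of fun i j => ![u i, w i] j

/- ### auxiliary lemmas -/

lemma exp_eq_of_hasDerivAt' {A : Type*} [NormedRing A] [NormedAlgebra ℝ A] [CompleteSpace A]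
    (x : A) (f : ℝ → A) (hf0 : f 0 = 1)
    (hf : ∀ s : ℝ, HasDerivAt f (x * f s) s) (t : ℝ) :
    NormedSpace.exp (t • x) = f t := by
  set g : ℝ → A := fun u => NormedSpace.exp (u • (-x)) * f u with hg
  have hgd : ∀ s : ℝ, HasDerivAt g 0 s := by
    intro s
    have h1 := hasDerivAt_exp_smul_const' (𝕂 := ℝ) (-x) s
    have h2 := h1.mul (hf s)
    have hc : Commute x (NormedSpace.exp (s • (-x))) :=
      (((Commute.refl x).neg_right).smul_right s).exp_right
    refine h2.congr_deriv ?_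
    rw [neg_mul, ← mul_assoc, hc.eq, neg_mul, neg_add_cancel]
  have hconst : g t = g 0 := by
    apply is_const_of_deriv_eq_zero (fun s => (hgd s).differentiableAt)
    intro s; exact (hgd s).deriv
  have hg0 : g 0 = 1 := by simp [hg, hf0]
  have hinv : NormedSpace.exp (t • x) * NormedSpace.exp (t • (-x)) = 1 := by
    letI : NormedAlgebra ℚ A := NormedAlgebra.restrictScalars ℚ ℝ A
    rw [← NormedSpace.exp_add_of_commute ((((Commute.refl x).neg_right).smul_left t).smul_right t)]
    simp
  calc NormedSpace.exp (t • x) = NormedSpace.exp (t • x) * g t := by rw [hconst, hg0, mul_one]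
    _ = (NormedSpace.exp (t • x) * NormedSpace.exp (t • (-x))) * f t := by
        rw [hg, mul_assoc]
    _ = f t := by rw [hinv, one_mul]

lemma hat_cube (ω : EuclideanSpace ℝ (Fin 3)) :
    hat ω ^ 3 = (-((ω 0)^2 + (ω 1)^2 + (ω 2)^2)) • hat ω := by
  ext i j
  fin_cases i <;> fin_cases j <;>
    simp [hat, pow_succ, Matrix.mul_apply, Fin.sum_univ_succ] <;> ring

lemma norm_sq_eq (ω : EuclideanSpace ℝ (Fin 3)) :
    ‖ω‖ ^ 2 = (ω 0)^2 + (ω 1)^2 + (ω 2)^2 := by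
  rw [EuclideanSpace.norm_eq, Real.sq_sqrt (by positivity)]
  simp [Fin.sum_univ_succ, Real.norm_eq_abs, sq_abs]; ring

lemma cols_decomp (X Y : Matrix (Fin 3) (Fin 3) ℝ) (u : Fin 3 → ℝ) :
    cols (X.mulVec u) (Y.mulVec u) = X * cols u 0 + Y * cols 0 u := by
  ext i j
  fin_cases j <;>
    simp [cols, Matrix.mul_apply, Matrix.mulVec, dotProduct]

lemma cols_mul_B (u : Fin 3 → ℝ) : cols u 0 * !![(0:ℝ), 1; 0, 0] = cols 0 u := by
  ext i j
  fin_cases j <;> simp [cols, Matrix.mul_apply, Fin.sum_univ_succ, Matrix.of_apply]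

/-- embedding of the top-left block as a linear map -/
noncomputable def Ltl : Matrix (Fin 3) (Fin 3) ℝ →ₗ[ℝ] Matrix (Fin 3 ⊕ Fin 2) (Fin 3 ⊕ Fin 2) ℝ where
  toFun X := Matrix.fromBlocks X 0 0 0
  map_add' X Y := by simp [Matrix.fromBlocks_add]
  map_smul' c X := by simp [Matrix.fromBlocks_smul]

/-- embedding of the top-right block as a linear map -/
noncomputable def Ktr : Matrix (Fin 3) (Fin 2) ℝ →ₗ[ℝ] Matrix (Fin 3 ⊕ Fin 2) (Fin 3 ⊕ Fin 2) ℝ where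
  toFun m := Matrix.fromBlocks 0 m 0 0
  map_add' X Y := by simp [Matrix.fromBlocks_add]
  map_smul' c X := by simp [Matrix.fromBlocks_smul]

lemma hd_c1 {θ : ℝ} (hθ0 : θ ≠ 0) (s : ℝ) :
    HasDerivAt (fun u => (1 - Real.cos (θ*u))/θ^2) (Real.sin (θ*s)/θ) s := by
  have h : HasDerivAt (fun u : ℝ => θ*u) θ s := by simpa using (hasDerivAt_id s).const_mul θ
  have hcos : HasDerivAt (fun u => Real.cos (θ*u)) (-Real.sin (θ*s)*θ) s :=
    (Real.hasDerivAt_cos (θ*s)).comp s h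
  have := ((hasDerivAt_const s (1:ℝ)).sub hcos).div_const (θ^2)
  refine this.congr_deriv ?_
  field_simp; ring

lemma hd_c2 {θ : ℝ} (hθ0 : θ ≠ 0) (s : ℝ) :
    HasDerivAt (fun u => (θ*u - Real.sin (θ*u))/θ^3) ((1 - Real.cos (θ*s))/θ^2) s := by
  have h : HasDerivAt (fun u : ℝ => θ*u) θ s := by simpa using (hasDerivAt_id s).const_mul θ
  have hsin : HasDerivAt (fun u => Real.sin (θ*u)) (Real.cos (θ*s)*θ) s :=
    (Real.hasDerivAt_sin (θ*s)).comp s h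
  have := (h.sub hsin).div_const (θ^3)
  refine this.congr_deriv ?_
  field_simp

lemma hd_c3 {θ : ℝ} (hθ0 : θ ≠ 0) (s : ℝ) :
    HasDerivAt (fun u => (θ^2*u^2/2 - 1 + Real.cos (θ*u))/θ^4)
      ((θ*s - Real.sin (θ*s))/θ^3) s := by
  have h : HasDerivAt (fun u : ℝ => θ*u) θ s := by simpa using (hasDerivAt_id s).const_mul θ
  have hcos : HasDerivAt (fun u => Real.cos (θ*u)) (-Real.sin (θ*s)*θ) s :=
    (Real.hasDerivAt_cos (θ*s)).comp s h
  have hsq : HasDerivAt (fun u : ℝ => θ^2*u^2/2) (θ^2*s) s := by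
    have := ((hasDerivAt_pow 2 s).const_mul (θ^2)).div_const 2
    refine this.congr_deriv ?_
    push_cast; ring
  have := ((hsq.sub (hasDerivAt_const s (1:ℝ))).add hcos).div_const (θ^4)
  refine this.congr_deriv ?_
  field_simp; ring

theorem stmt15 (ω a : EuclideanSpace ℝ (Fin 3)) (θ : ℝ) (hθ : θ = ‖ω‖) (hθ0 : θ ≠ 0)
    (Ω : Matrix (Fin 3) (Fin 3) ℝ) (hΩ : Ω = hat ω)
    (A_N : Matrix (Fin 3) (Fin 2) ℝ) (hAN : A_N = cols (fun i => a i) 0)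
    (B : Matrix (Fin 2) (Fin 2) ℝ) (hB : B = !![0, 1; 0, 0])
    (N : Matrix (Fin 3 ⊕ Fin 2) (Fin 3 ⊕ Fin 2) ℝ) (hN : N = Matrix.fromBlocks Ω A_N 0 B)
    (t : ℝ)
    (P_N : Matrix (Fin 3) (Fin 2) ℝ)
    (hPN : P_N = cols
      ((t • (1 : Matrix (Fin 3) (Fin 3) ℝ)
        + ((1 - Real.cos (θ * t)) / θ ^ 2) • Ω
        + ((θ * t - Real.sin (θ * t)) / θ ^ 3) • Ω ^ 2).mulVec a)
      (((t ^ 2 / 2) • (1 : Matrix (Fin 3) (Fin 3) ℝ)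
        + ((θ * t - Real.sin (θ * t)) / θ ^ 3) • Ω
        + ((θ ^ 2 * t ^ 2 / 2 - 1 + Real.cos (θ * t)) / θ ^ 4) • Ω ^ 2).mulVec a)) :
    NormedSpace.exp (t • N) =
      Matrix.fromBlocks (NormedSpace.exp (t • Ω)) P_N 0 (1 + t • B) := by
  letI : NormedRing (Matrix (Fin 3) (Fin 3) ℝ) := Matrix.linftyOpNormedRing
  letI : NormedAlgebra ℝ (Matrix (Fin 3) (Fin 3) ℝ) := Matrix.linftyOpNormedAlgebra
  letI : NormedRing (Matrix (Fin 3 ⊕ Fin 2) (Fin 3 ⊕ Fin 2) ℝ) := Matrix.linftyOpNormedRing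
  letI : NormedAlgebra ℝ (Matrix (Fin 3 ⊕ Fin 2) (Fin 3 ⊕ Fin 2) ℝ) :=
    Matrix.linftyOpNormedAlgebra
  letI : NormedAddCommGroup (Matrix (Fin 3) (Fin 2) ℝ) := Matrix.linftyOpNormedAddCommGroup
  letI : NormedSpace ℝ (Matrix (Fin 3) (Fin 2) ℝ) := Matrix.linftyOpNormedSpace
  -- basic algebraic facts
  have hΩ3 : Ω ^ 3 = (-(θ^2)) • Ω := by
    rw [hΩ, hat_cube, hθ, norm_sq_eq]
  have hAN' : A_N = cols a 0 := hAN
  have hANB : A_N * B = cols 0 a := by rw [hAN', hB]; exact cols_mul_B a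
  have hB2 : B * B = 0 := by
    rw [hB]; ext i j; fin_cases i <;> fin_cases j <;>
      simp [Matrix.mul_apply, Fin.sum_univ_succ]
  -- the candidate solution
  set P : ℝ → Matrix (Fin 3) (Fin 2) ℝ := fun u =>
    u • A_N + ((1 - Real.cos (θ*u))/θ^2) • (Ω * A_N)
      + ((θ*u - Real.sin (θ*u))/θ^3) • (Ω^2 * A_N)
      + (u^2/2) • (A_N * B) + ((θ*u - Real.sin (θ*u))/θ^3) • (Ω * (A_N * B))
      + ((θ^2*u^2/2 - 1 + Real.cos (θ*u))/θ^4) • (Ω^2 * (A_N * B)) with hPdef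
  set Pd : ℝ → Matrix (Fin 3) (Fin 2) ℝ := fun s =>
    A_N + (Real.sin (θ*s)/θ) • (Ω * A_N)
      + ((1 - Real.cos (θ*s))/θ^2) • (Ω^2 * A_N)
      + s • (A_N * B) + ((1 - Real.cos (θ*s))/θ^2) • (Ω * (A_N * B))
      + ((θ*s - Real.sin (θ*s))/θ^3) • (Ω^2 * (A_N * B)) with hPddef
  have hPder : ∀ s : ℝ, HasDerivAt P (Pd s) s := by
    intro s
    have h0 : HasDerivAt (fun u : ℝ => u • A_N) A_N s := by
      have := (hasDerivAt_id s).smul_const A_N; rwa [one_smul] at this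
    have h3 : HasDerivAt (fun u : ℝ => (u^2/2) • (A_N * B)) (s • (A_N * B)) s := by
      have hs : HasDerivAt (fun u : ℝ => u^2/2) s s := by
        have := (hasDerivAt_pow 2 s).div_const 2
        refine this.congr_deriv ?_
        push_cast; ring
      exact hs.smul_const (A_N * B)
    exact ((((h0.add ((hd_c1 hθ0 s).smul_const (Ω * A_N))).add
      ((hd_c2 hθ0 s).smul_const (Ω^2 * A_N))).add h3).add
      ((hd_c2 hθ0 s).smul_const (Ω * (A_N * B)))).add
      ((hd_c3 hθ0 s).smul_const (Ω^2 * (A_N * B)))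
  set Lc := LinearMap.toContinuousLinearMap Ltl with hLc
  set Kc := LinearMap.toContinuousLinearMap Ktr with hKc
  set C0 : Matrix (Fin 3 ⊕ Fin 2) (Fin 3 ⊕ Fin 2) ℝ := Matrix.fromBlocks 0 0 0 1 with hC0
  set D0 : Matrix (Fin 3 ⊕ Fin 2) (Fin 3 ⊕ Fin 2) ℝ := Matrix.fromBlocks 0 0 0 B with hD0
  set f : ℝ → Matrix (Fin 3 ⊕ Fin 2) (Fin 3 ⊕ Fin 2) ℝ := fun u =>
    Lc (NormedSpace.exp (u • Ω)) + Kc (P u) + C0 + u • D0 with hfdef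
  have hfeq : ∀ u : ℝ, f u =
      Matrix.fromBlocks (NormedSpace.exp (u • Ω)) (P u) 0 (1 + u • B) := by
    intro u
    show Matrix.fromBlocks _ 0 0 0 + Matrix.fromBlocks 0 (P u) 0 0 + C0 + u • D0 = _
    rw [hC0, hD0]
    simp only [Matrix.fromBlocks_smul, smul_zero, Matrix.fromBlocks_add,
      add_zero, zero_add]
  -- the key algebraic identity
  have hkey : ∀ s : ℝ, Ω * P s + (A_N + s • (A_N * B)) = Pd s := by
    intro s
    have e2 : Ω * (Ω * A_N) = Ω^2 * A_N := by rw [pow_two, Matrix.mul_assoc]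
    have e3 : Ω * (Ω^2 * A_N) = (-(θ^2)) • (Ω * A_N) := by
      rw [← Matrix.mul_assoc, ← pow_succ', hΩ3, Matrix.smul_mul]
    have e5 : Ω * (Ω * (A_N * B)) = Ω^2 * (A_N * B) := by rw [pow_two, Matrix.mul_assoc]
    have e6 : Ω * (Ω^2 * (A_N * B)) = (-(θ^2)) • (Ω * (A_N * B)) := by
      rw [← Matrix.mul_assoc, ← pow_succ', hΩ3, Matrix.smul_mul]
    simp only [hPdef, hPddef, Matrix.mul_add, Matrix.mul_smul, e2, e3, e5, e6, smul_smul]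
    match_scalars <;> field_simp <;> ring
  -- derivative of f is N * f
  have hmain : ∀ s : ℝ, HasDerivAt f (N * f s) s := by
    intro s
    have hNf : N * f s = Lc (Ω * NormedSpace.exp (s • Ω)) + Kc (Pd s) + 0 + D0 := by
      rw [hfeq s, hN, Matrix.fromBlocks_multiply]
      simp only [Matrix.zero_mul, Matrix.mul_zero, add_zero, zero_add]
      simp only [Matrix.mul_add, Matrix.mul_one, Matrix.mul_smul, hB2, smul_zero, add_zero]
      rw [hkey s]
      show _ = Matrix.fromBlocks _ 0 0 0 + Matrix.fromBlocks 0 (Pd s) 0 0 + D0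
      rw [hD0]
      simp only [Matrix.fromBlocks_add, add_zero, zero_add]
    rw [hNf]
    have hL : HasDerivAt (fun u : ℝ => Lc (NormedSpace.exp (u • Ω)))
        (Lc (Ω * NormedSpace.exp (s • Ω))) s :=
      Lc.hasFDerivAt.comp_hasDerivAt s (hasDerivAt_exp_smul_const' (𝕂 := ℝ) Ω s)
    have hK : HasDerivAt (fun u : ℝ => Kc (P u)) (Kc (Pd s)) s :=
      Kc.hasFDerivAt.comp_hasDerivAt s (hPder s)
    have hC : HasDerivAt (fun _ : ℝ => C0) 0 s := hasDerivAt_const s C0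
    have hD : HasDerivAt (fun u : ℝ => u • D0) D0 s := by
      have := (hasDerivAt_id s).smul_const D0; rwa [one_smul] at this
    exact ((hL.add hK).add hC).add hD
  -- initial condition
  have hf0 : f 0 = 1 := by
    rw [hfeq 0]
    have hP0 : P 0 = 0 := by
      simp only [hPdef]
      norm_num
    rw [hP0, zero_smul, NormedSpace.exp_zero, zero_smul, add_zero,
      ← Matrix.fromBlocks_one]
  -- conclude
  have hPt : P t = P_N := by
    rw [hPN, cols_decomp, ← hAN', ← hANB]
    simp only [hPdef]
    simp only [Matrix.add_mul, Matrix.smul_mul, Matrix.one_mul]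
    abel
  refine (exp_eq_of_hasDerivAt' N f hf0 hmain t).trans ?_
  rw [hfeq t, hPt]
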